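/- Let ρ_q(x) = cosh(√q x) - tanh(√q l') sinh(√q x) for x ∈ [0, l'] and q > 0. Then for each fixed x ∈ [0, l'], the function h_q(x) := H(q)(1 - ρ_q(x)) with H(q) = 1/(√q tanh(√q l')) converges to x - x²/(2l') as q → 0+. -/

import Mathlib

open Filter Set

private lemma slope_sinh (c : ℝ) :
    Tendsto (fun s => Real.sinh (s * c) / s) (nhdsWithin 0 (Ioi 0)) (nhds c) := by
  have h : HasDerivAt (fun s : ℝ => Real.sinh (s * c)) c 0 := by
    have := (Real.hasDerivAt_sinh (0 * c)).comp 0 (hasDerivAt_mul_const c)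
    simpa [Function.comp_def] using this
  have h2 := hasDerivAt_iff_tendsto_slope.mp h
  have h3 : Tendsto (slope (fun s : ℝ => Real.sinh (s * c)) 0)
      (nhdsWithin 0 (Ioi 0)) (nhds c) :=
    h2.mono_left (nhdsWithin_mono 0 (fun y hy => hy.ne'))
  refine h3.congr (fun s => ?_)
  simp [slope_def_field]

theorem stmt_4 (l' : ℝ) (hl' : 0 < l') (ρ : ℝ → ℝ → ℝ) (H : ℝ → ℝ)
    (hρ : ∀ q x, ρ q x =
      Real.cosh (Real.sqrt q * x) - Real.tanh (Real.sqrt q * l') * Real.sinh (Real.sqrt q * x))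
    (hH : ∀ q, H q = 1 / (Real.sqrt q * Real.tanh (Real.sqrt q * l')))
    (x : ℝ) (hx : x ∈ Icc (0 : ℝ) l') :
    Tendsto (fun q => H q * (1 - ρ q x)) (nhdsWithin 0 (Ioi 0))
      (nhds (x - x ^ 2 / (2 * l'))) := by
  have hl0 : l' ≠ 0 := hl'.ne'
  have hA := slope_sinh (x / 2)
  have hS := slope_sinh l'
  have hC := slope_sinh x
  have hcosh : Tendsto (fun s : ℝ => Real.cosh (s * l')) (nhdsWithin 0 (Ioi 0)) (nhds 1) := by
    have hcont : Continuous fun s : ℝ => Real.cosh (s * l') :=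
      Real.continuous_cosh.comp (continuous_id.mul continuous_const)
    simpa using (hcont.tendsto 0).mono_left nhdsWithin_le_nhds
  have hB : Tendsto (fun s => Real.sinh (s * l') / s / Real.cosh (s * l'))
      (nhdsWithin 0 (Ioi 0)) (nhds (l' / 1)) := hS.div hcosh one_ne_zero
  have hg : Tendsto (fun s => -2 * (Real.sinh (s * (x / 2)) / s) ^ 2 /
        (Real.sinh (s * l') / s / Real.cosh (s * l')) + Real.sinh (s * x) / s)
      (nhdsWithin 0 (Ioi 0)) (nhds (-2 * (x / 2) ^ 2 / (l' / 1) + x)) :=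
    (((hA.pow 2).const_mul (-2)).div hB (by simp [hl0])).add hC
  have hsqrt : Tendsto Real.sqrt (nhdsWithin 0 (Ioi 0)) (nhdsWithin 0 (Ioi 0)) := by
    apply tendsto_nhdsWithin_of_tendsto_nhds_of_eventually_within
    · simpa using (Real.continuous_sqrt.tendsto 0).mono_left nhdsWithin_le_nhds
    · filter_upwards [self_mem_nhdsWithin] with q hq
      exact Real.sqrt_pos.mpr hq
  have hval : -2 * (x / 2) ^ 2 / (l' / 1) + x = x - x ^ 2 / (2 * l') := by
    field_simp; ring
  have hcomp := hg.comp hsqrt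
  rw [hval] at hcomp
  refine hcomp.congr' ?_
  filter_upwards [self_mem_nhdsWithin] with q hq
  have hs : 0 < Real.sqrt q := Real.sqrt_pos.mpr hq
  set s := Real.sqrt q with hsdef
  have hsl : 0 < s * l' := mul_pos hs hl'
  have hsinh : Real.sinh (s * l') ≠ 0 := (Real.sinh_pos_iff.mpr hsl).ne'
  have hcoshne : Real.cosh (s * l') ≠ 0 := (Real.cosh_pos _).ne'
  have hcoshx : Real.cosh (s * (x / 2)) ≠ 0 := (Real.cosh_pos _).ne'
  have htanh : Real.tanh (s * l') ≠ 0 := by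
    rw [Real.tanh_eq_sinh_div_cosh]
    exact div_ne_zero hsinh hcoshne
  have hcx : Real.cosh (s * x) = 2 * Real.sinh (s * (x / 2)) ^ 2 + 1 := by
    have : s * x = 2 * (s * (x / 2)) := by ring
    rw [this, Real.cosh_two_mul, Real.cosh_sq]; ring
  have hsx : Real.sinh (s * x) = 2 * Real.sinh (s * (x / 2)) * Real.cosh (s * (x / 2)) := by
    have : s * x = 2 * (s * (x / 2)) := by ring
    rw [this, Real.sinh_two_mul]
  simp only [Function.comp_apply, hH, hρ, ← hsdef]
  rw [hcx, hsx, Real.tanh_eq_sinh_div_cosh]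
  field_simp
  ring
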